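/- Let G be a distance-regular graph with valency k, diameter Δ, and intersection array {b_0=k,...,b_{Δ−1}; c_1=1,...,c_Δ}. Define k_0 = 1 and k_i = (b_{i−1}/c_i) k_{i−1}. Then the average hitting time from a vertex u to a vertex v at distance i satisfies H(G;(v,u)) = ∑_{j=1}^{i} (k / (k_{j−1} b_{j−1})) ∑_{l=j}^{Δ} k_l. -/

import Mathlib

open Finset

/-- Any vertex at positive distance from `v` has a neighbor strictly closer to `v`. -/
lemma exists_closer_neighbor {V : Type*} (G : SimpleGraph V) (hconn : G.Connected) (v u : V)
    (h : G.dist v u ≠ 0) : ∃ w, G.Adj u w ∧ G.dist v w + 1 = G.dist v u := by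
  have hr : G.Reachable v u := SimpleGraph.Reachable.of_dist_ne_zero h
  obtain ⟨p, hp⟩ := hr.symm.exists_walk_length_eq_dist
  rw [SimpleGraph.dist_comm] at hp
  cases p with
  | nil => simp at hp; simp at h
  | cons hadj q =>
    rename_i w
    refine ⟨w, hadj, ?_⟩
    have h1 : G.dist w v ≤ q.length := SimpleGraph.dist_le q
    have h2 : G.dist v w ≤ G.dist v u - 1 := by
      rw [SimpleGraph.dist_comm]
      simp only [SimpleGraph.Walk.length_cons] at hp
      omega
    have h3 : G.dist v u ≤ G.dist v w + G.dist w u := hconn.dist_triangle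
    have h4 : G.dist w u ≤ 1 := by
      have := SimpleGraph.dist_le hadj.symm.toWalk
      simpa using this
    omega

/-- Along a geodesic, there are vertices at every intermediate distance. -/
lemma exists_intermediate_vertex {V : Type*} (G : SimpleGraph V) (hconn : G.Connected)
    (v u : V) (i : ℕ) (hi : i ≤ G.dist v u) :
    ∃ w, G.dist v w = i ∧ G.dist w u = G.dist v u - i := by
  induction i with
  | zero => exact ⟨v, SimpleGraph.dist_self, by simp⟩
  | succ n ih =>
    obtain ⟨w, hw1, hw2⟩ := ih (by omega)
    have hne : G.dist u w ≠ 0 := by rw [SimpleGraph.dist_comm]; omega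
    obtain ⟨x, hadj, hx⟩ := exists_closer_neighbor G hconn u w hne
    have hcw : G.dist u w = G.dist w u := SimpleGraph.dist_comm
    have hcx : G.dist u x = G.dist x u := SimpleGraph.dist_comm
    have h4 : G.dist w x ≤ 1 := by
      have := SimpleGraph.dist_le hadj.toWalk
      simpa using this
    have h3 : G.dist v x ≤ G.dist v w + G.dist w x := hconn.dist_triangle
    have hge : G.dist v u ≤ G.dist v x + G.dist x u := hconn.dist_triangle
    exact ⟨x, by omega, by omega⟩

/-- Maximum principle: a function vanishing at `v` and harmonic elsewhere is nonpositive. -/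
lemma harmonic_nonpos {V : Type*} [Fintype V] [DecidableEq V]
    (G : SimpleGraph V) [DecidableRel G.Adj] (hconn : G.Connected) (v : V) (g : V → ℝ)
    (hgv : g v = 0)
    (hrec : ∀ u, u ≠ v → g u = (∑ w ∈ G.neighborFinset u, g w) / (G.degree u : ℝ)) :
    ∀ u, g u ≤ 0 := by
  obtain ⟨u0, _, hmax⟩ := Finset.exists_max_image Finset.univ g ⟨v, Finset.mem_univ v⟩
  suffices h : g u0 ≤ 0 by
    exact fun u => le_trans (hmax u (Finset.mem_univ u)) h
  have claim : ∀ n : ℕ, ∀ u : V, G.dist v u = n → g u = g u0 → g u0 ≤ 0 := by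
    intro n
    induction n with
    | zero =>
      intro u hd hg
      have huv : v = u := (hconn.dist_eq_zero_iff).mp hd
      rw [← hg, ← huv, hgv]
    | succ n ih =>
      intro u hd hg
      have hne : u ≠ v := by
        intro h; subst h; rw [SimpleGraph.dist_self] at hd; omega
      obtain ⟨w, hadj, hw⟩ := exists_closer_neighbor G hconn v u (by omega)
      have hwmem : w ∈ G.neighborFinset u := (SimpleGraph.mem_neighborFinset G u w).mpr hadj
      have hdegpos : 0 < G.degree u := by
        rw [← SimpleGraph.card_neighborFinset_eq_degree]
        exact Finset.card_pos.mpr ⟨w, hwmem⟩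
      have hallmax : ∀ x ∈ G.neighborFinset u, g x = g u0 := by
        by_contra hcon
        push_neg at hcon
        obtain ⟨x0, hx0mem, hx0⟩ := hcon
        have hsum : (∑ x ∈ G.neighborFinset u, g x) < (G.degree u : ℝ) * g u0 := by
          have := Finset.sum_lt_sum (f := g) (g := fun _ => g u0)
            (fun x _ => hmax x (Finset.mem_univ x))
            ⟨x0, hx0mem, lt_of_le_of_ne (hmax x0 (Finset.mem_univ x0)) hx0⟩
          rwa [Finset.sum_const, SimpleGraph.card_neighborFinset_eq_degree,
            nsmul_eq_mul] at this
        have : g u < g u0 := by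
          rw [hrec u hne, div_lt_iff₀ (by positivity)]
          linarith [hsum]
        exact absurd hg (ne_of_lt this)
      exact ih w (by omega) (hallmax w hwmem)
  exact claim _ u0 rfl rfl

/-- The candidate hitting-time function of the distance. -/
noncomputable def hitF (k Δ : ℕ) (b kseq : ℕ → ℕ) (n : ℕ) : ℝ :=
  ∑ j ∈ Finset.Icc 1 n, ((k : ℝ) / ((kseq (j - 1) : ℝ) * (b (j - 1) : ℝ))) *
    ∑ l ∈ Finset.Icc j Δ, (kseq l : ℝ)

lemma hitF_succ (k Δ : ℕ) (b kseq : ℕ → ℕ) (n : ℕ) :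
    hitF k Δ b kseq (n + 1) = hitF k Δ b kseq n +
      ((k : ℝ) / ((kseq n : ℝ) * (b n : ℝ))) * ∑ l ∈ Finset.Icc (n+1) Δ, (kseq l : ℝ) := by
  unfold hitF
  rw [← Finset.insert_Icc_right_eq_Icc_add_one (by omega), Finset.sum_insert (by simp)]
  simp [add_comm]

/-- The key one-step recurrence for `hitF`. -/
lemma hitF_step (k Δ : ℕ) (b c kseq : ℕ → ℕ)
    (hkseq : ∀ i : ℕ, 1 ≤ i → i ≤ Δ → c i * kseq i = b (i - 1) * kseq (i - 1))
    (hbpos : ∀ i, i < Δ → 0 < b i) (hbΔ : b Δ = 0)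
    (hkpos : ∀ i, i ≤ Δ → 0 < kseq i)
    (i : ℕ) (h1 : 1 ≤ i) (hΔ : i ≤ Δ) :
    (c i : ℝ) * (hitF k Δ b kseq i - hitF k Δ b kseq (i - 1)) =
      (k : ℝ) + (b i : ℝ) * (hitF k Δ b kseq (i + 1) - hitF k Δ b kseq i) := by
  obtain ⟨m, rfl⟩ : ∃ m, i = m + 1 := ⟨i - 1, by omega⟩
  have e1 := hitF_succ k Δ b kseq m
  have e2 := hitF_succ k Δ b kseq (m + 1)
  have hm : m + 1 - 1 = m := by omega
  rw [hm, e2, e1, add_sub_cancel_left, add_sub_cancel_left]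
  have hcast : (c (m+1) : ℝ) * (kseq (m+1) : ℝ) = (b m : ℝ) * (kseq m : ℝ) := by
    have := hkseq (m+1) (by omega) hΔ
    rw [hm] at this
    exact_mod_cast this
  have hkm : (0:ℝ) < kseq m := by exact_mod_cast hkpos m (by omega)
  have hbm : (0:ℝ) < b m := by exact_mod_cast hbpos m (by omega)
  have hki : (0:ℝ) < kseq (m+1) := by exact_mod_cast hkpos (m+1) hΔ
  rcases eq_or_lt_of_le hΔ with hiΔ | hiΔ
  · -- i = Δ : b i = 0, Icc (m+1) Δ = {m+1}
    rw [← hiΔ] at hbΔ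
    rw [← hiΔ, hbΔ, Finset.Icc_self, Finset.sum_singleton]
    push_cast
    field_simp
    linear_combination (k:ℝ) * (kseq (m+1):ℝ) * hcast
  · -- i < Δ
    have hbi : (0:ℝ) < b (m+1) := by exact_mod_cast hbpos (m+1) hiΔ
    have hS : ∑ l ∈ Finset.Icc (m+1) Δ, (kseq l : ℝ)
        = (kseq (m+1) : ℝ) + ∑ l ∈ Finset.Icc (m+1+1) Δ, (kseq l : ℝ) := by
      rw [← Finset.insert_Icc_add_one_left_eq_Icc (by omega), Finset.sum_insert (by simp)]
    rw [hS]
    field_simp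
    linear_combination (k:ℝ) * hcast

/-- Let `G` be a connected distance-regular graph with valency `k`,
diameter `Δ` and intersection array `{b 0 = k, ..., b (Δ−1); c 1 = 1, ..., c Δ}`.
With `kseq 0 = 1` and `kseq i = (b (i−1) / c i) · kseq (i−1)` (expressed as
`c i · kseq i = b (i−1) · kseq (i−1)`), the average hitting time `H v u` from `u`
to `v` (characterized by `H v v = 0` and the one-step recurrence) satisfies
`H v u = ∑_{j=1}^{dist u v} (k / (kseq (j−1) · b (j−1))) · ∑_{l=j}^{Δ} kseq l`. -/
theorem distanceRegular_hitting_time {V : Type*} [Fintype V] [DecidableEq V]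
    (G : SimpleGraph V) [DecidableRel G.Adj] (hconn : G.Connected)
    (k Δ : ℕ) (hreg : G.IsRegularOfDegree k)
    (hΔub : ∀ u v : V, G.dist u v ≤ Δ) (hΔex : ∃ u v : V, G.dist u v = Δ)
    (b c : ℕ → ℕ) (hb0 : b 0 = k) (hc1 : c 1 = 1)
    (hDRG : ∀ (u v : V) (i : ℕ), G.dist v u = i →
      ((G.neighborFinset u).filter (fun w => G.dist v w = i - 1)).card = c i ∧
      ((G.neighborFinset u).filter (fun w => G.dist v w = i + 1)).card = b i)
    (kseq : ℕ → ℕ) (hkseq0 : kseq 0 = 1)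
    (hkseq : ∀ i : ℕ, 1 ≤ i → i ≤ Δ → c i * kseq i = b (i - 1) * kseq (i - 1))
    (H : V → V → ℝ) (hH0 : ∀ v : V, H v v = 0)
    (hHrec : ∀ v u : V, u ≠ v →
      H v u = 1 + (∑ w ∈ G.neighborFinset u, H v w) / (G.degree u : ℝ)) :
    ∀ u v : V, H v u = ∑ j ∈ Finset.Icc 1 (G.dist u v),
      ((k : ℝ) / ((kseq (j - 1) : ℝ) * (b (j - 1) : ℝ))) *
        ∑ l ∈ Finset.Icc j Δ, (kseq l : ℝ) := by
  -- reduce to `hitF`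
  suffices hmain : ∀ u v : V, H v u = hitF k Δ b kseq (G.dist v u) by
    intro u v
    rw [hmain u v, SimpleGraph.dist_comm]
    rfl
  -- trivial case Δ = 0
  rcases Nat.eq_zero_or_pos Δ with hΔ0 | hΔpos
  · intro u v
    have h0 : G.dist v u = 0 := le_antisymm (hΔ0 ▸ hΔub v u) (Nat.zero_le _)
    have : v = u := hconn.dist_eq_zero_iff.mp h0
    subst this
    rw [h0, hH0]
    simp [hitF]
  -- the generic facts
  obtain ⟨u₀, v₀, hd₀⟩ := hΔex
  have hbpos : ∀ i, i < Δ → 0 < b i := by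
    intro i hi
    obtain ⟨w, hw1, hw2⟩ := exists_intermediate_vertex G hconn u₀ v₀ i (by omega)
    have hne : G.dist w v₀ ≠ 0 := by omega
    obtain ⟨x, hadj, hx⟩ := exists_closer_neighbor G hconn v₀ w (by
      rw [SimpleGraph.dist_comm]; omega)
    -- x is a neighbor of w at distance i+1 from u₀
    have hxv : G.dist v₀ x = G.dist v₀ w - 1 := by omega
    have hxu : G.dist u₀ x = i + 1 := by
      have h1 : G.dist u₀ x ≤ G.dist u₀ w + G.dist w x := hconn.dist_triangle
      have h2 : G.dist u₀ v₀ ≤ G.dist u₀ x + G.dist x v₀ := hconn.dist_triangle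
      have h3 : G.dist w x ≤ 1 := by
        have := SimpleGraph.dist_le hadj.toWalk; simpa using this
      have h4 : G.dist x v₀ = G.dist v₀ x := SimpleGraph.dist_comm
      have h5 : G.dist w v₀ = G.dist v₀ w := SimpleGraph.dist_comm
      omega
    have hcard := (hDRG w u₀ i hw1).2
    rw [← hcard]
    apply Finset.card_pos.mpr
    exact ⟨x, Finset.mem_filter.mpr ⟨(SimpleGraph.mem_neighborFinset G w x).mpr hadj, hxu⟩⟩
  have hcpos : ∀ i, 1 ≤ i → i ≤ Δ → 0 < c i := by
    intro i h1 h2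
    obtain ⟨w, hw1, _⟩ := exists_intermediate_vertex G hconn u₀ v₀ i (by omega)
    obtain ⟨x, hadj, hx⟩ := exists_closer_neighbor G hconn u₀ w (by omega)
    have hcard := (hDRG w u₀ i hw1).1
    rw [← hcard]
    apply Finset.card_pos.mpr
    exact ⟨x, Finset.mem_filter.mpr ⟨(SimpleGraph.mem_neighborFinset G w x).mpr hadj, by omega⟩⟩
  have hkpos : ∀ i, i ≤ Δ → 0 < kseq i := by
    intro i
    induction i with
    | zero => intro _; omega
    | succ n ih =>
      intro hn
      have h1 := hkseq (n+1) (by omega) hn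
      have h2 : 0 < b n := hbpos n (by omega)
      have h3 : 0 < kseq n := ih (by omega)
      have h5 : n + 1 - 1 = n := rfl
      rw [h5] at h1
      have h4 : 0 < c (n+1) * kseq (n+1) := h1 ▸ Nat.mul_pos h2 h3
      exact Nat.pos_of_ne_zero (fun h => by simp [h] at h4)
  have hbΔ : b Δ = 0 := by
    have hd' : G.dist u₀ v₀ = Δ := hd₀
    have := (hDRG v₀ u₀ Δ hd').2
    rw [← this]
    rw [Finset.card_eq_zero]
    apply Finset.filter_false_of_mem
    intro x _
    have := hΔub u₀ x
    omega
  have hk : 0 < k := hb0 ▸ hbpos 0 hΔpos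
  -- Main argument: fix v, compare H v with hitF ∘ dist v
  intro u v
  set F : V → ℝ := fun w => hitF k Δ b kseq (G.dist v w) with hF
  -- F satisfies the recurrence
  have hFrec : ∀ u : V, u ≠ v → F u = 1 + (∑ w ∈ G.neighborFinset u, F w) / (G.degree u : ℝ) := by
    intro u hne
    set i := G.dist v u with hi
    have hi1 : 1 ≤ i := hconn.pos_dist_of_ne (Ne.symm hne)
    have hiΔ : i ≤ Δ := hΔub v u
    set A := (G.neighborFinset u).filter (fun w => G.dist v w = i - 1) with hA
    set B := (G.neighborFinset u).filter (fun w => G.dist v w = i) with hB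
    set C := (G.neighborFinset u).filter (fun w => G.dist v w = i + 1) with hC
    have hmem : ∀ w ∈ G.neighborFinset u,
        G.dist v w = i - 1 ∨ G.dist v w = i ∨ G.dist v w = i + 1 := by
      intro w hw
      have hadj : G.Adj u w := (SimpleGraph.mem_neighborFinset G u w).mp hw
      have h1 : G.dist v w ≤ G.dist v u + G.dist u w := hconn.dist_triangle
      have h2 : G.dist v u ≤ G.dist v w + G.dist w u := hconn.dist_triangle
      have h3 : G.dist u w ≤ 1 := by
        have := SimpleGraph.dist_le hadj.toWalk; simpa using this
      have h4 : G.dist w u = G.dist u w := SimpleGraph.dist_comm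
      omega
    have hunion : G.neighborFinset u = (A ∪ B) ∪ C := by
      ext w
      simp only [hA, hB, hC, Finset.mem_union, Finset.mem_filter]
      constructor
      · intro hw
        rcases hmem w hw with h | h | h
        · exact Or.inl (Or.inl ⟨hw, h⟩)
        · exact Or.inl (Or.inr ⟨hw, h⟩)
        · exact Or.inr ⟨hw, h⟩
      · rintro ((⟨hw, _⟩ | ⟨hw, _⟩) | ⟨hw, _⟩) <;> exact hw
    have hdAB : Disjoint A B := by
      rw [Finset.disjoint_left]
      intro w hwA hwB
      simp only [hA, hB, Finset.mem_filter] at hwA hwB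
      omega
    have hdABC : Disjoint (A ∪ B) C := by
      rw [Finset.disjoint_left]
      intro w hwAB hwC
      simp only [hA, hB, hC, Finset.mem_union, Finset.mem_filter] at hwAB hwC
      omega
    have hcA : A.card = c i := (hDRG u v i rfl).1
    have hcC : C.card = b i := (hDRG u v i rfl).2
    have hcards : A.card + B.card + C.card = k := by
      have : (G.neighborFinset u).card = k := by
        rw [SimpleGraph.card_neighborFinset_eq_degree]; exact hreg u
      rw [hunion] at this
      rw [Finset.card_union_of_disjoint hdABC, Finset.card_union_of_disjoint hdAB] at this
      omega
    -- sums over the parts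
    have hsumA : ∑ w ∈ A, F w = (c i : ℝ) * hitF k Δ b kseq (i - 1) := by
      rw [← hcA]
      rw [Finset.sum_congr rfl (fun w hw => by
        simp only [hF]
        rw [(Finset.mem_filter.mp hw).2])]
      rw [Finset.sum_const, nsmul_eq_mul]
    have hsumB : ∑ w ∈ B, F w = (B.card : ℝ) * hitF k Δ b kseq i := by
      rw [Finset.sum_congr rfl (fun w hw => by
        simp only [hF]
        rw [(Finset.mem_filter.mp hw).2])]
      rw [Finset.sum_const, nsmul_eq_mul]
    have hsumC : ∑ w ∈ C, F w = (b i : ℝ) * hitF k Δ b kseq (i + 1) := by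
      rw [← hcC]
      rw [Finset.sum_congr rfl (fun w hw => by
        simp only [hF]
        rw [(Finset.mem_filter.mp hw).2])]
      rw [Finset.sum_const, nsmul_eq_mul]
    have hsum : ∑ w ∈ G.neighborFinset u, F w =
        (c i : ℝ) * hitF k Δ b kseq (i - 1) + (B.card : ℝ) * hitF k Δ b kseq i
          + (b i : ℝ) * hitF k Δ b kseq (i + 1) := by
      rw [hunion, Finset.sum_union hdABC, Finset.sum_union hdAB, hsumA, hsumB, hsumC]
    have hstep := hitF_step k Δ b c kseq hkseq hbpos hbΔ hkpos i hi1 hiΔ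
    have hBcast : (B.card : ℝ) = (k : ℝ) - (c i : ℝ) - (b i : ℝ) := by
      rw [← hcA, ← hcC, ← hcards]
      push_cast
      ring
    have hdeg : (G.degree u : ℝ) = (k : ℝ) := by exact_mod_cast congrArg Nat.cast (hreg u)
    rw [hdeg, hsum, hBcast]
    have hkne : (k : ℝ) ≠ 0 := by positivity
    have : F u = hitF k Δ b kseq i := by simp [hF, hi]
    rw [this]
    field_simp
    linear_combination hstep
  -- uniqueness via the maximum principle
  set g : V → ℝ := fun w => H v w - F w with hg
  have hgv : g v = 0 := by
    simp only [hg, hF, hH0 v, SimpleGraph.dist_self]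
    simp [hitF]
  have hgrec : ∀ u : V, u ≠ v → g u = (∑ w ∈ G.neighborFinset u, g w) / (G.degree u : ℝ) := by
    intro u hne
    simp only [hg]
    rw [hHrec v u hne, hFrec u hne, Finset.sum_sub_distrib, sub_div]
    ring
  have hpos : ∀ u, g u ≤ 0 := harmonic_nonpos G hconn v g hgv hgrec
  have hneg : ∀ u, (-g) u ≤ 0 := by
    apply harmonic_nonpos G hconn v (-g) (by simp [hgv])
    intro u hne
    simp only [Pi.neg_apply]
    have hns : (∑ w ∈ G.neighborFinset u, -(g w)) = -∑ w ∈ G.neighborFinset u, g w := by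
      simp
    rw [hgrec u hne, hns, neg_div]
  have : g u = 0 := le_antisymm (hpos u) (by have := hneg u; simp at this; linarith)
  have := this
  simp only [hg] at this
  linarith [this]
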